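/- For every integer n ≥ 1 there exists a constant C = C(n) > 0 such that for all integers μ ≥ 1 and k ≥ 1 the following hold: if k < μ then binom(n+k, n) ≤ μ·k^{n−1}/(n−1)! + C·k^{n−2}, and if k ≥ μ then binom(n+k, n) − binom(n+k−μ, n) ≤ μ·k^{n−1}/(n−1)! + C·k^{n−2}. -/

import Mathlib

open Finset

-- (k+a)^(m+1) ≤ k^(m+1) + ((a+1)^(m+2) - 1) * k^m  for real k ≥ 1, a ≥ 0
lemma pow_aux (a : ℝ) (ha : 0 ≤ a) : ∀ m : ℕ, ∀ k : ℝ, 1 ≤ k →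
    (k + a) ^ (m + 1) ≤ k ^ (m + 1) + ((a + 1) ^ (m + 2) - 1) * k ^ m := by
  intro m
  induction m with
  | zero =>
    intro k hk
    simp only [zero_add, pow_one, pow_zero, mul_one]
    nlinarith [sq_nonneg a, ha]
  | succ m ih =>
    intro k hk
    have hk0 : (0:ℝ) < k := lt_of_lt_of_le one_pos hk
    have hkm : k ^ m ≤ k ^ (m+1) := pow_le_pow_right₀ hk (by omega)
    have hkmpos : (0:ℝ) < k ^ m := pow_pos hk0 m
    have hD : (1:ℝ) ≤ (a + 1) ^ (m + 2) := one_le_pow₀ (by linarith)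
    have ih' := ih k hk
    have h1 : (k + a) ^ (m + 2) ≤ (k + a) * (k ^ (m+1) + ((a+1)^(m+2) - 1) * k ^ m) := by
      have : (k + a) ^ (m + 2) = (k + a) * (k + a) ^ (m + 1) := by ring
      rw [this]
      exact mul_le_mul_of_nonneg_left ih' (by linarith)
    have h2 : (k + a) * (k ^ (m+1) + ((a+1)^(m+2) - 1) * k ^ m)
        ≤ k ^ (m + 2) + ((a + 1) ^ (m + 3) - 1) * k ^ (m + 1) := by
      have expand : (k + a) * (k ^ (m+1) + ((a+1)^(m+2) - 1) * k ^ m)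
          = k ^ (m+2) + ((a+1)^(m+2) - 1) * (k * k ^ m) + a * k ^ (m+1)
            + a * ((a+1)^(m+2) - 1) * k ^ m := by ring
      have e2 : k * k ^ m = k ^ (m+1) := by ring
      rw [expand, e2]
      have key : ((a+1)^(m+2) - 1) + a + a * ((a+1)^(m+2) - 1) = (a+1)^(m+3) - 1 := by ring
      nlinarith [mul_le_mul_of_nonneg_left hkm (by nlinarith : (0:ℝ) ≤ a * ((a+1)^(m+2) - 1))]
    calc (k + a) ^ (m + 2) ≤ _ := h1
      _ ≤ _ := h2

-- telescoping
lemma tel (r k : ℕ) : ∀ μ : ℕ, μ ≤ k →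
    (r + 1 + k).choose (r + 1)
      = (r + 1 + k - μ).choose (r + 1) + ∑ j ∈ range μ, (r + k - j).choose r := by
  intro μ
  induction μ with
  | zero => simp
  | succ μ ih =>
    intro h
    rw [ih (by omega), Finset.sum_range_succ]
    have h1 : r + 1 + k - μ = (r + k - μ) + 1 := by omega
    have h2 : r + 1 + k - (μ + 1) = r + k - μ := by omega
    rw [h1, h2, Nat.choose_succ_succ' (r + k - μ) r]
    ring

-- choose ≤ pow / factorial
lemma choose_le (x r : ℕ) : (x.choose r : ℝ) ≤ (x:ℝ) ^ r / (r.factorial : ℝ) := by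
  rw [le_div_iff₀ (by positivity : (0:ℝ) < (r.factorial : ℝ))]
  have h1 := Nat.descFactorial_le_pow x r
  have h2 := Nat.descFactorial_eq_factorial_mul_choose x r
  have h3 : x.choose r * r.factorial ≤ x ^ r := by
    rw [mul_comm, ← h2]; exact h1
  exact_mod_cast h3

lemma main_real (r k μ : ℕ) (hr : 1 ≤ r) (hk : 1 ≤ k) (hμ : μ ≤ k) :
    ((r + 1 + k).choose (r + 1) : ℝ) - ((r + 1 + k - μ).choose (r + 1) : ℝ)
      ≤ ((μ:ℝ) * (k:ℝ) ^ r + ((r:ℝ) * ((r:ℝ)+1) ^ (r+1)) * (k:ℝ) ^ (r-1)) / (r.factorial : ℝ) := by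
  have hk0 : (0:ℝ) < (k:ℝ) := by exact_mod_cast hk
  have hk1 : (1:ℝ) ≤ (k:ℝ) := by exact_mod_cast hk
  have hfac : (0:ℝ) < (r.factorial : ℝ) := by positivity
  have htel := tel r k μ hμ
  have hcast : ((r + 1 + k).choose (r + 1) : ℝ)
      = ((r + 1 + k - μ).choose (r + 1) : ℝ) + ∑ j ∈ range μ, ((r + k - j).choose r : ℝ) := by
    exact_mod_cast congrArg (Nat.cast : ℕ → ℝ) htel
  have hsum : ∑ j ∈ range μ, ((r + k - j).choose r : ℝ)
      ≤ ((μ:ℝ) * (k:ℝ) ^ r + ((r:ℝ) * ((r:ℝ)+1) ^ (r+1)) * (k:ℝ) ^ (r-1)) / (r.factorial : ℝ) := by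
    set E : ℝ := (((r:ℝ)+1) ^ (r+1)) * (k:ℝ) ^ (r-1) with hE
    have hE0 : 0 ≤ E := by positivity
    have hterm : ∀ j ∈ range μ, ((r + k - j).choose r : ℝ)
        ≤ ((k:ℝ) ^ r + if j < r then E else 0) / (r.factorial : ℝ) := by
      intro j hj
      have hjk : j < μ := Finset.mem_range.mp hj
      refine (choose_le _ r).trans ?_
      gcongr
      · by_cases hjr : j < r
        · simp only [if_pos hjr]
          have hle : ((r + k - j : ℕ) : ℝ) ≤ (k:ℝ) + (r:ℝ) := by
            have : r + k - j ≤ k + r := by omega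
            calc ((r + k - j : ℕ) : ℝ) ≤ ((k + r : ℕ) : ℝ) := by exact_mod_cast this
              _ = (k:ℝ) + (r:ℝ) := by push_cast; ring
          have h0 : (0:ℝ) ≤ ((r + k - j : ℕ) : ℝ) := by positivity
          have key : ((k:ℝ) + (r:ℝ)) ^ r
              ≤ (k:ℝ) ^ r + (((r:ℝ)+1) ^ (r+1) - 1) * (k:ℝ) ^ (r-1) := by
            obtain ⟨m, hm⟩ : ∃ m, r = m + 1 := ⟨r - 1, by omega⟩
            subst hm
            have := pow_aux ((m+1:ℕ):ℝ) (by positivity) m (k:ℝ) hk1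
            push_cast at this ⊢
            simpa using this
          calc ((r + k - j : ℕ):ℝ) ^ r ≤ ((k:ℝ) + (r:ℝ)) ^ r :=
                pow_le_pow_left₀ h0 hle r
            _ ≤ (k:ℝ) ^ r + (((r:ℝ)+1) ^ (r+1) - 1) * (k:ℝ) ^ (r-1) := key
            _ ≤ (k:ℝ) ^ r + E := by
                rw [hE]
                have : (0:ℝ) ≤ (k:ℝ) ^ (r-1) := by positivity
                nlinarith
        · simp only [if_neg hjr]
          have hle : ((r + k - j : ℕ) : ℝ) ≤ (k:ℝ) := by
            have : r + k - j ≤ k := by omega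
            exact_mod_cast this
          have h0 : (0:ℝ) ≤ ((r + k - j : ℕ) : ℝ) := by positivity
          simpa using pow_le_pow_left₀ h0 hle r
    calc ∑ j ∈ range μ, ((r + k - j).choose r : ℝ)
        ≤ ∑ j ∈ range μ, ((k:ℝ) ^ r + if j < r then E else 0) / (r.factorial : ℝ) :=
          Finset.sum_le_sum hterm
      _ = (∑ j ∈ range μ, ((k:ℝ) ^ r + if j < r then E else 0)) / (r.factorial : ℝ) := by
          rw [Finset.sum_div]
      _ ≤ ((μ:ℝ) * (k:ℝ) ^ r + (r:ℝ) * E) / (r.factorial : ℝ) := by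
          gcongr ?_ / _
          rw [Finset.sum_add_distrib, Finset.sum_const, Finset.card_range, nsmul_eq_mul]
          have hite : ∑ j ∈ range μ, (if j < r then E else 0) ≤ (r:ℝ) * E := by
            rw [← Finset.sum_filter]
            have hsub : (range μ).filter (· < r) ⊆ range r := by
              intro x hx
              simp only [Finset.mem_filter, Finset.mem_range] at hx ⊢
              exact hx.2
            calc ∑ _j ∈ (range μ).filter (· < r), E
                = (((range μ).filter (· < r)).card : ℝ) * E := by
                  rw [Finset.sum_const, nsmul_eq_mul]
              _ ≤ (r:ℝ) * E := by
                  apply mul_le_mul_of_nonneg_right _ hE0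
                  have := Finset.card_le_card hsub
                  simp only [Finset.card_range] at this
                  exact_mod_cast this
          linarith
      _ = ((μ:ℝ) * (k:ℝ) ^ r + ((r:ℝ) * ((r:ℝ)+1) ^ (r+1)) * (k:ℝ) ^ (r-1)) / (r.factorial : ℝ) := by
          rw [hE]; ring
  rw [hcast]
  simp only [add_sub_cancel_left]
  exact hsum

theorem hilbert_function_estimate (n : ℕ) (hn : 1 ≤ n) :
    ∃ C : ℝ, 0 < C ∧
      ∀ (μ k : ℕ), 1 ≤ μ → 1 ≤ k →
        (k < μ →
          ((n + k).choose n : ℝ) ≤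
            (μ : ℝ) * (k : ℝ) ^ ((n : ℝ) - 1) / (n - 1).factorial +
              C * (k : ℝ) ^ ((n : ℝ) - 2)) ∧
        (μ ≤ k →
          ((n + k).choose n : ℝ) - ((n + k - μ).choose n : ℝ) ≤
            (μ : ℝ) * (k : ℝ) ^ ((n : ℝ) - 1) / (n - 1).factorial +
              C * (k : ℝ) ^ ((n : ℝ) - 2)) := by
  refine ⟨(n:ℝ) ^ (n + 2) + 1, by positivity, ?_⟩
  intro μ k hμ hk
  have hk0 : (0:ℝ) < (k:ℝ) := by exact_mod_cast hk
  have hk1 : (1:ℝ) ≤ (k:ℝ) := by exact_mod_cast hk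
  rcases eq_or_lt_of_le hn with h1 | h2
  · -- n = 1
    subst h1
    rw [show ((1:ℕ):ℝ) - 1 = 0 by norm_num, show ((1:ℕ):ℝ) - 2 = (-1:ℝ) by norm_num,
      Real.rpow_zero]
    have hpos : (0:ℝ) < (k:ℝ) ^ (-1:ℝ) := Real.rpow_pos_of_pos hk0 _
    have hC : (0:ℝ) < ((1:ℝ) ^ (1 + 2) + 1) * (k:ℝ) ^ (-1:ℝ) := by positivity
    simp only [Nat.choose_one_right, Nat.sub_self, Nat.factorial_zero, Nat.cast_one, div_one,
      mul_one]
    constructor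
    · intro hkμ
      have h1 : (k:ℝ) + 1 ≤ (μ:ℝ) := by exact_mod_cast hkμ
      have h2 : ((1 + k : ℕ):ℝ) = (k:ℝ) + 1 := by push_cast; ring
      linarith [hpos, hC]
    · intro hμk
      have hsub : ((1 + k - μ : ℕ):ℝ) = 1 + (k:ℝ) - (μ:ℝ) := by
        have : μ ≤ 1 + k := by omega
        push_cast [this]; ring
      have h2 : ((1 + k : ℕ):ℝ) = (k:ℝ) + 1 := by push_cast; ring
      linarith [hpos, hC]
  · -- n ≥ 2
    obtain ⟨r, rfl⟩ : ∃ r, n = r + 1 := ⟨n - 1, by omega⟩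
    have hr1 : 1 ≤ r := by omega
    have hF1 : (1:ℝ) ≤ ((r.factorial : ℕ):ℝ) := by exact_mod_cast r.factorial_pos
    have hF0 : (0:ℝ) < ((r.factorial : ℕ):ℝ) := by linarith
    have e1 : (k:ℝ) ^ (((r + 1 : ℕ):ℝ) - 1) = (k:ℝ) ^ (r:ℕ) := by
      rw [show ((r + 1 : ℕ):ℝ) - 1 = ((r:ℕ):ℝ) by push_cast; ring, Real.rpow_natCast]
    have e2 : (k:ℝ) ^ (((r + 1 : ℕ):ℝ) - 2) = (k:ℝ) ^ ((r - 1 : ℕ)) := by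
      rw [show ((r + 1 : ℕ):ℝ) - 2 = ((r - 1 : ℕ):ℝ) by push_cast [hr1]; ring,
        Real.rpow_natCast]
    have efac : (r + 1 - 1) = r := by omega
    have hkr1 : (1:ℝ) ≤ (k:ℝ) ^ ((r - 1 : ℕ)) := one_le_pow₀ hk1
    have hkr0 : (0:ℝ) ≤ (k:ℝ) ^ ((r - 1 : ℕ)) := by positivity
    have hA : (r:ℝ) * ((r:ℝ) + 1) ^ (r + 1) ≤ ((r + 1 : ℕ):ℝ) ^ ((r + 1) + 2) := by
      have h1 : ((r:ℝ) + 1) ^ (r + 1) ≤ ((r:ℝ) + 1) ^ ((r + 1) + 2) := by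
        apply pow_le_pow_right₀ (by push_cast; linarith [Nat.cast_nonneg (α := ℝ) r]) (by omega)
      have h2 : (0:ℝ) ≤ ((r:ℝ) + 1) ^ ((r + 1) + 2) := by positivity
      have h3 : (r:ℝ) ≤ 1 * ((r:ℝ) + 1) := by linarith [Nat.cast_nonneg (α := ℝ) r]
      have h4 : (r:ℝ) * ((r:ℝ) + 1) ^ (r + 1) ≤ ((r:ℝ) + 1) * ((r:ℝ) + 1) ^ (r + 1) := by
        apply mul_le_mul_of_nonneg_right (by linarith) (by positivity)
      calc (r:ℝ) * ((r:ℝ) + 1) ^ (r + 1) ≤ ((r:ℝ) + 1) ^ (r + 2) := by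
            rw [show ((r:ℝ) + 1) ^ (r + 2) = ((r:ℝ) + 1) * ((r:ℝ) + 1) ^ (r + 1) by ring]
            exact h4
        _ ≤ ((r + 1 : ℕ):ℝ) ^ ((r + 1) + 2) := by
            push_cast
            apply pow_le_pow_right₀ (by linarith [Nat.cast_nonneg (α := ℝ) r]) (by omega)
    rw [e1, e2, efac]
    constructor
    · intro hkμ
      have hmain := main_real r k k hr1 hk (le_refl k)
      simp only [Nat.add_sub_cancel, Nat.choose_self, Nat.cast_one] at hmain
      have hkμ' : (k:ℝ) + 1 ≤ (μ:ℝ) := by exact_mod_cast hkμ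
      have hdiv1 : (k:ℝ) * (k:ℝ) ^ r / (r.factorial : ℝ) + (k:ℝ) ^ r / (r.factorial : ℝ)
          ≤ (μ:ℝ) * (k:ℝ) ^ r / (r.factorial : ℝ) := by
        rw [← add_div, div_le_div_iff_of_pos_right hF0]
        nlinarith [pow_nonneg hk0.le r]
      have hdiv2 : ((r:ℝ) * ((r:ℝ) + 1) ^ (r + 1)) * (k:ℝ) ^ (r - 1) / (r.factorial : ℝ)
          ≤ ((r + 1 : ℕ):ℝ) ^ ((r + 1) + 2) * (k:ℝ) ^ (r - 1) := by
        calc ((r:ℝ) * ((r:ℝ) + 1) ^ (r + 1)) * (k:ℝ) ^ (r - 1) / (r.factorial : ℝ)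
            ≤ ((r:ℝ) * ((r:ℝ) + 1) ^ (r + 1)) * (k:ℝ) ^ (r - 1) := by
              apply div_le_self (by positivity) hF1
          _ ≤ ((r + 1 : ℕ):ℝ) ^ ((r + 1) + 2) * (k:ℝ) ^ (r - 1) :=
              mul_le_mul_of_nonneg_right hA hkr0
      have hsplit : ((k:ℝ) * (k:ℝ) ^ r + ((r:ℝ) * ((r:ℝ) + 1) ^ (r + 1)) * (k:ℝ) ^ (r - 1))
            / (r.factorial : ℝ)
          = (k:ℝ) * (k:ℝ) ^ r / (r.factorial : ℝ)
            + ((r:ℝ) * ((r:ℝ) + 1) ^ (r + 1)) * (k:ℝ) ^ (r - 1) / (r.factorial : ℝ) := by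
        rw [add_div]
      have hd0 : (0:ℝ) ≤ (k:ℝ) ^ r / (r.factorial : ℝ) := by positivity
      rw [hsplit] at hmain
      nlinarith
    · intro hμk
      have hmain := main_real r k μ hr1 hk hμk
      have hdiv2 : ((r:ℝ) * ((r:ℝ) + 1) ^ (r + 1)) * (k:ℝ) ^ (r - 1) / (r.factorial : ℝ)
          ≤ ((r + 1 : ℕ):ℝ) ^ ((r + 1) + 2) * (k:ℝ) ^ (r - 1) := by
        calc ((r:ℝ) * ((r:ℝ) + 1) ^ (r + 1)) * (k:ℝ) ^ (r - 1) / (r.factorial : ℝ)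
            ≤ ((r:ℝ) * ((r:ℝ) + 1) ^ (r + 1)) * (k:ℝ) ^ (r - 1) := by
              apply div_le_self (by positivity) hF1
          _ ≤ ((r + 1 : ℕ):ℝ) ^ ((r + 1) + 2) * (k:ℝ) ^ (r - 1) :=
              mul_le_mul_of_nonneg_right hA hkr0
      rw [add_div] at hmain
      nlinarith
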